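/- Whitney's theorem: Let G and H be finite graphs with the same number of edges, G 3-connected, and H without isolated vertices. Any bijection between the edge sets of G and H that maps a set of edges to a simple cycle if and only if the original set is a simple cycle (a cycle isomorphism) is induced by a graph isomorphism between G and H. -/

import Mathlib

/-- A set of edges (given as unordered pairs) is the edge set of a simple cycle of `G`. -/
def IsCycleSet {V : Type*} (G : SimpleGraph V) (E' : Set (Sym2 V)) : Prop :=
  ∃ (v : V) (c : G.Walk v v), c.IsCycle ∧ {e | e ∈ c.edges} = E'

open SimpleGraph

namespace Whitney

variable {V : Type*} {G : SimpleGraph V}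


lemma sym2_exists (z : Sym2 V) : ∃ a b, z = s(a, b) := by
  induction z using Sym2.ind with
  | _ a b => exact ⟨a, b, rfl⟩

lemma isPath_concat {u v w : V} {p : G.Walk u v} (hp : p.IsPath) (h : G.Adj v w)
    (hw : w ∉ p.support) : (p.concat h).IsPath := by
  rw [SimpleGraph.Walk.isPath_def, SimpleGraph.Walk.support_concat]
  simp only [List.concat_eq_append, List.nodup_append, List.nodup_cons, List.nodup_nil,
    and_true, List.mem_cons]
  refine ⟨hp.support_nodup, by simp, ?_⟩
  intro a ha
  simp only [List.mem_cons, List.not_mem_nil, or_false, forall_eq, ne_eq]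
  rintro rfl
  exact hw ha

lemma mem_support_of_mem_walk_edge {u v : V} {p : G.Walk u v} {e : Sym2 V}
    (he : e ∈ p.edges) {x : V} (hx : x ∈ e) : x ∈ p.support := by
  obtain ⟨a, b, rfl⟩ := sym2_exists e
  rcases Sym2.mem_iff.mp hx with rfl | rfl
  · exact p.fst_mem_support_of_mem_edges he
  · exact p.snd_mem_support_of_mem_edges he

lemma path_unique_edge_at_end {y : V} :
    ∀ {x : V} (q : G.Walk x y), q.IsPath → x ≠ y →
      ∃ d ∈ q.edges, y ∈ d ∧ ∀ e ∈ q.edges, y ∈ e → e = d := by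
  intro x q
  induction q with
  | nil => intro _ hxy; exact absurd rfl hxy
  | @cons a m b h' q' ih =>
    intro hq hxy
    rcases eq_or_ne m b with hmb | hmb
    · subst hmb
      have hq' : q' = SimpleGraph.Walk.nil := by
        have := hq.of_cons
        rwa [SimpleGraph.Walk.isPath_iff_eq_nil] at this
      subst hq'
      refine ⟨s(a, m), by simp, Sym2.mem_mk_right a m, ?_⟩
      intro e he _
      simpa using he
    · obtain ⟨d, hd, hyd, huniq⟩ := ih hq.of_cons hmb
      refine ⟨d, by simp [hd], hyd, ?_⟩
      intro e he hye
      rw [SimpleGraph.Walk.edges_cons, List.mem_cons] at he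
      rcases he with rfl | he
      · exfalso
        rcases Sym2.mem_iff.mp hye with rfl | rfl
        · exact hxy rfl
        · exact hmb rfl
      · exact huniq e he hye

end Whitney

namespace Whitney
variable {V : Type*} {G : SimpleGraph V}

lemma cycle_at_even_aux {t : V} (c' : G.Walk t t) (hc' : c'.IsCycle) :
    Even {e : G.edgeSet | ↑e ∈ c'.edges ∧ t ∈ (e : Sym2 V)}.ncard := by
  cases c' with
  | nil => exact absurd rfl hc'.ne_nil
  | @cons _ w _ h q =>
    obtain ⟨hq, hne⟩ := (SimpleGraph.Walk.cons_isCycle_iff q h).mp hc'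
    have hwt : w ≠ t := h.ne'
    obtain ⟨d, hd, htd, huniq⟩ := path_unique_edge_at_end q hq hwt
    have hA : s(t, w) ∈ G.edgeSet := G.mem_edgeSet.mpr h
    have hB : d ∈ G.edgeSet := q.edges_subset_edgeSet hd
    have hset : {e : G.edgeSet | ↑e ∈ (SimpleGraph.Walk.cons h q).edges ∧ t ∈ (e : Sym2 V)}
        = {⟨s(t, w), hA⟩, ⟨d, hB⟩} := by
      ext e
      simp only [Set.mem_setOf_eq, SimpleGraph.Walk.edges_cons, List.mem_cons,
        Set.mem_insert_iff, Set.mem_singleton_iff]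
      constructor
      · rintro ⟨hmem | hmem, hte⟩
        · exact Or.inl (Subtype.ext hmem)
        · exact Or.inr (Subtype.ext (huniq _ hmem hte))
      · rintro (rfl | rfl)
        · exact ⟨Or.inl rfl, Sym2.mem_mk_left t w⟩
        · exact ⟨Or.inr hd, htd⟩
    rw [hset, Set.ncard_pair]
    · exact ⟨1, rfl⟩
    · intro hcontra
      apply hne
      have : s(t, w) = d := congrArg Subtype.val hcontra
      rw [this]; exact hd

lemma cycle_even_edges_at {u : V} {c : G.Walk u u} (hc : c.IsCycle) (t : V) :
    Even {e : G.edgeSet | ↑e ∈ c.edges ∧ t ∈ (e : Sym2 V)}.ncard := by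
  classical
  by_cases ht : t ∈ c.support
  · have hrot := cycle_at_even_aux (c.rotate t ht) (hc.rotate ht)
    have hmemiff : ∀ e : Sym2 V, e ∈ (c.rotate t ht).edges ↔ e ∈ c.edges :=
      fun e => (c.rotate_edges t ht).mem_iff
    have : {e : G.edgeSet | ↑e ∈ c.edges ∧ t ∈ (e : Sym2 V)}
        = {e : G.edgeSet | ↑e ∈ (c.rotate t ht).edges ∧ t ∈ (e : Sym2 V)} := by
      ext e; simp [hmemiff]
    rw [this]; exact hrot
  · have : {e : G.edgeSet | ↑e ∈ c.edges ∧ t ∈ (e : Sym2 V)} = ∅ := by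
      ext e
      simp only [Set.mem_setOf_eq, Set.mem_empty_iff_false, iff_false, not_and]
      intro hmem hte
      exact ht (mem_support_of_mem_walk_edge hmem hte)
    rw [this, Set.ncard_empty]
    exact Even.zero

end Whitney

namespace Whitney
variable {V : Type*} {G : SimpleGraph V}

lemma reachable_of_mem_support {u v w : V} (p : G.Walk u v) (h : w ∈ p.support) :
    G.Reachable u w := by
  classical
  exact ⟨p.takeUntil w h⟩

/-- Construct a cycle through the two edges `s(y,x)`, `s(y,z)` whose other edges avoid `s`. -/
lemma exists_cycle_via {s : Set V} (hconn : (G.induce sᶜ).Connected) {x z y : V}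
    (hx : x ∈ sᶜ) (hz : z ∈ sᶜ) (hy : y ∈ s) (hxz : x ≠ z)
    (hyx : G.Adj y x) (hyz : G.Adj y z) :
    ∃ c : G.Walk y y, c.IsCycle ∧ s(y, x) ∈ c.edges ∧ s(y, z) ∈ c.edges ∧
      ∀ e ∈ c.edges, e = s(y, x) ∨ e = s(y, z) ∨ ∀ u ∈ e, u ∈ sᶜ := by
  classical
  obtain ⟨w0⟩ := hconn.preconnected ⟨x, hx⟩ ⟨z, hz⟩
  let p0 := w0.toPath
  let F := SimpleGraph.Embedding.induce (G := G) sᶜ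
  let p : G.Walk x z := p0.val.map F.toHom
  have hp : p.IsPath := SimpleGraph.Walk.map_isPath_of_injective F.injective p0.prop
  have hsupp : ∀ u ∈ p.support, u ∈ sᶜ := by
    intro u hu
    rw [show p.support = _ from SimpleGraph.Walk.support_map _ _, List.mem_map] at hu
    obtain ⟨a, _, rfl⟩ := hu
    exact a.prop
  have hyp : y ∉ p.support := fun hyp => hsupp y hyp hy
  have hedge : ∀ e ∈ p.edges, ∀ u ∈ e, u ∈ sᶜ :=
    fun e he u hu => hsupp u (mem_support_of_mem_walk_edge he hu)
  let q : G.Walk x y := p.concat hyz.symm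
  have hq : q.IsPath := isPath_concat hp hyz.symm hyp
  have hqe : q.edges = p.edges ++ [s(z, y)] := by
    rw [p.edges_concat hyz.symm, List.concat_eq_append]
  have hyx' : s(y, x) ∉ q.edges := by
    rw [hqe, List.mem_append]
    rintro (h | h)
    · exact hyp (mem_support_of_mem_walk_edge h (Sym2.mem_mk_left y x))
    · rw [List.mem_singleton, Sym2.eq_iff] at h
      rcases h with ⟨h1, h2⟩ | ⟨h1, h2⟩
      · exact hz (h1 ▸ hy)
      · exact hxz h2
  refine ⟨SimpleGraph.Walk.cons hyx q, (SimpleGraph.Walk.cons_isCycle_iff q hyx).mpr ⟨hq, hyx'⟩,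
    ?_, ?_, ?_⟩
  · simp
  · rw [SimpleGraph.Walk.edges_cons, hqe]
    simp [Sym2.eq_swap]
  · intro e he
    rw [SimpleGraph.Walk.edges_cons, List.mem_cons, hqe, List.mem_append] at he
    rcases he with rfl | he | he
    · exact Or.inl rfl
    · exact Or.inr (Or.inr (hedge e he))
    · rw [List.mem_singleton] at he
      subst he
      exact Or.inr (Or.inl Sym2.eq_swap)

end Whitney

namespace Whitney

variable {V : Type*} {G : SimpleGraph V}

/-- The collection of edge sets of cycles, as sets of the edge subtype. -/
def cycSets (X : SimpleGraph V) : Set (Set X.edgeSet) :=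
  {C | ∃ (u : V) (c : X.Walk u u), c.IsCycle ∧ C = {e : X.edgeSet | ↑e ∈ c.edges}}

/-- The star of a vertex, as a set of the edge subtype. -/
def star (X : SimpleGraph V) (v : V) : Set X.edgeSet := {e : X.edgeSet | v ∈ (e : Sym2 V)}

/-- `D` meets every cycle of the family evenly. -/
def CocycOf {ε : Type*} (cyc : Set (Set ε)) (D : Set ε) : Prop :=
  ∀ C ∈ cyc, Even ((C ∩ D).ncard)

/-- Chain relation: linked by a sequence of cycles avoiding `D`. -/
def ChainOf {ε : Type*} (cyc : Set (Set ε)) (D : Set ε) : ε → ε → Prop :=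
  Relation.ReflTransGen (fun g g' => ∃ C ∈ cyc, C ∩ D = ∅ ∧ g ∈ C ∧ g' ∈ C)

/-- every two elements outside `D` are chained by cycles avoiding `D`. -/
def PpropOf {ε : Type*} (cyc : Set (Set ε)) (D : Set ε) : Prop :=
  ∀ e f, e ∉ D → f ∉ D → ChainOf cyc D e f

lemma cycSets_iff_isCycleSet (X : SimpleGraph V) (C : Set X.edgeSet) :
    C ∈ cycSets X ↔ IsCycleSet X (Subtype.val '' C) := by
  constructor
  · rintro ⟨u, c, hc, rfl⟩
    refine ⟨u, c, hc, ?_⟩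
    ext s
    simp only [Set.mem_setOf_eq, Set.mem_image]
    constructor
    · intro hs
      exact ⟨⟨s, c.edges_subset_edgeSet hs⟩, hs, rfl⟩
    · rintro ⟨e, he, rfl⟩
      exact he
  · rintro ⟨u, c, hc, hEq⟩
    refine ⟨u, c, hc, ?_⟩
    ext e
    constructor
    · intro he
      have h2 : (e : Sym2 V) ∈ {s | s ∈ c.edges} := hEq ▸ Set.mem_image_of_mem _ he
      exact h2
    · intro he
      have h2 : (e : Sym2 V) ∈ Subtype.val '' C := hEq ▸ he
      rwa [Subtype.val_injective.mem_set_image] at h2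

lemma star_cocyc (X : SimpleGraph V) (v : V) : CocycOf (cycSets X) (star X v) := by
  rintro C ⟨u, c, hc, rfl⟩
  have : {e : X.edgeSet | ↑e ∈ c.edges} ∩ star X v
      = {e : X.edgeSet | ↑e ∈ c.edges ∧ v ∈ (e : Sym2 V)} := rfl
  rw [this]
  exact cycle_even_edges_at hc v

lemma cocycOf_image {α β : Type*} (σ : α ≃ β) (cyc : Set (Set α)) (cyc' : Set (Set β))
    (h : ∀ C, C ∈ cyc ↔ σ '' C ∈ cyc') (D : Set α) (hD : CocycOf cyc D) :
    CocycOf cyc' (σ '' D) := by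
  intro C' hC'
  have hC : σ.symm '' C' ∈ cyc := by
    rw [h, Equiv.image_symm_image]
    exact hC'
  have heven := hD _ hC
  have himg : C' ∩ σ '' D = σ '' (σ.symm '' C' ∩ D) := by
    rw [Set.image_inter σ.injective, Equiv.image_symm_image]
  rw [himg, Set.ncard_image_of_injective _ σ.injective]
  exact heven

lemma ppropOf_image {α β : Type*} (σ : α ≃ β) (cyc : Set (Set α)) (cyc' : Set (Set β))
    (h : ∀ C, C ∈ cyc ↔ σ '' C ∈ cyc') (D : Set α) (hD : PpropOf cyc D) :
    PpropOf cyc' (σ '' D) := by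
  intro e' f' he' hf'
  have he : σ.symm e' ∉ D := fun hmem => he' (by
    have : σ (σ.symm e') ∈ σ '' D := Set.mem_image_of_mem _ hmem
    simpa using this)
  have hf : σ.symm f' ∉ D := fun hmem => hf' (by
    have : σ (σ.symm f') ∈ σ '' D := Set.mem_image_of_mem _ hmem
    simpa using this)
  have hchain := hD _ _ he hf
  have := Relation.ReflTransGen.lift (r := fun g g' => ∃ C ∈ cyc, C ∩ D = ∅ ∧ g ∈ C ∧ g' ∈ C)
    (p := fun g g' => ∃ C ∈ cyc', C ∩ σ '' D = ∅ ∧ g ∈ C ∧ g' ∈ C) σ ?_ _ _ hchain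
  · simpa [Function.onFun, ChainOf] using this
  · rintro a b ⟨C, hCc, hCD, haC, hbC⟩
    refine ⟨σ '' C, (h C).mp hCc, ?_, Set.mem_image_of_mem _ haC, Set.mem_image_of_mem _ hbC⟩
    rw [← Set.image_inter σ.injective, hCD, Set.image_empty]

end Whitney

namespace Whitney
variable {W : Type*}

lemma core_H (H : SimpleGraph W) (hiso : ∀ w : W, ∃ w', H.Adj w w')
    (D : Set H.edgeSet) (hne : D.Nonempty) (hcoc : CocycOf (cycSets H) D)
    (hmin : ∀ D' ⊆ D, D'.Nonempty → CocycOf (cycSets H) D' → D' = D)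
    (hP : PpropOf (cycSets H) D) : ∃ w, D = star H w := by
  classical
  by_cases hall : ∃ w, ∀ e : H.edgeSet, w ∈ (e : Sym2 W) → e ∈ D
  · obtain ⟨w, hw⟩ := hall
    have hsub : star H w ⊆ D := fun e he => hw e he
    have hne' : (star H w).Nonempty := by
      obtain ⟨w', hww'⟩ := hiso w
      exact ⟨⟨s(w, w'), H.mem_edgeSet.mpr hww'⟩, Sym2.mem_mk_left w w'⟩
    exact ⟨w, (hmin _ hsub hne' (star_cocyc H w)).symm⟩
  · exfalso
    push_neg at hall
    obtain ⟨h0, h0D⟩ := hne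
    obtain ⟨a, b, hab⟩ := sym2_exists (h0 : Sym2 W)
    have hadj : H.Adj a b := H.mem_edgeSet.mp (hab ▸ h0.prop)
    set Dsym : Set (Sym2 W) := Subtype.val '' D with hDsym
    set H' := H.deleteEdges Dsym with hH'
    have hmemD : ∀ e : H.edgeSet, (e : Sym2 W) ∈ Dsym ↔ e ∈ D := fun e =>
      Subtype.val_injective.mem_set_image
    have hedgeH' : ∀ e : H.edgeSet, (e : Sym2 W) ∈ H'.edgeSet ↔ e ∉ D := by
      intro e
      rw [hH', SimpleGraph.edgeSet_deleteEdges, Set.mem_diff, hmemD]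
      exact ⟨fun h => h.2, fun h => ⟨e.prop, h⟩⟩
    by_cases hreach : H'.Reachable a b
    · -- a cycle meeting D exactly once
      obtain ⟨pw⟩ := hreach
      set p := pw.toPath with hp0
      have hpedges : ∀ e ∈ p.val.edges, e ∈ H.edgeSet := fun e he =>
        (SimpleGraph.edgeSet_deleteEdges Dsym ▸ p.val.edges_subset_edgeSet he).1
      set p' : H.Walk a b := p.val.transfer H hpedges with hp'
      have hp'E : p'.edges = p.val.edges := p.val.edges_transfer hpedges
      have hp'path : p'.IsPath := p.prop.transfer hpedges
      have hp'nD : ∀ e ∈ p'.edges, e ∉ Dsym := by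
        intro e he
        rw [hp'E] at he
        have := p.val.edges_subset_edgeSet he
        rw [SimpleGraph.edgeSet_deleteEdges, Set.mem_diff] at this
        exact this.2
      have hc : (SimpleGraph.Walk.cons hadj.symm p').IsCycle := by
        rw [SimpleGraph.Walk.cons_isCycle_iff]
        refine ⟨hp'path, fun hmem => ?_⟩
        have : s(b, a) ∈ Dsym := by
          rw [Sym2.eq_swap, ← hab]
          exact Set.mem_image_of_mem _ h0D
        exact hp'nD _ hmem this
      have hcyc : {e : H.edgeSet | ↑e ∈ (SimpleGraph.Walk.cons hadj.symm p').edges}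
          ∈ cycSets H := ⟨b, _, hc, rfl⟩
      have heven := hcoc _ hcyc
      have hsingle : {e : H.edgeSet | ↑e ∈ (SimpleGraph.Walk.cons hadj.symm p').edges} ∩ D
          = {h0} := by
        ext e
        simp only [Set.mem_inter_iff, Set.mem_setOf_eq, SimpleGraph.Walk.edges_cons,
          List.mem_cons, Set.mem_singleton_iff]
        constructor
        · rintro ⟨hmem | hmem, heD⟩
          · apply Subtype.ext
            rw [hmem, Sym2.eq_swap, hab]
          · exact absurd ((hmemD e).mpr heD) (hp'nD _ hmem)
        · rintro rfl
          refine ⟨Or.inl ?_, h0D⟩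
          rw [hab, Sym2.eq_swap]
      rw [hsingle, Set.ncard_singleton] at heven
      simp at heven
    · -- use the chain property to get a contradiction
      obtain ⟨ea, haa, haD⟩ := hall a
      obtain ⟨eb, hbb, hbD⟩ := hall b
      have hchain := hP ea eb haD hbD
      set Q : H.edgeSet → Prop := fun e => ∀ u ∈ (e : Sym2 W), H'.Reachable a u with hQ
      have hstep : ∀ g g', (∃ C ∈ cycSets H, C ∩ D = ∅ ∧ g ∈ C ∧ g' ∈ C) → Q g → Q g' := by
        rintro g g' ⟨C, ⟨u0, c, hcc, rfl⟩, hCD, hg, hg'⟩ hQg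
        have hce : ∀ e' ∈ c.edges, e' ∈ H'.edgeSet := by
          intro e' he'
          have heS : e' ∈ H.edgeSet := c.edges_subset_edgeSet he'
          rw [hedgeH' ⟨e', heS⟩]
          intro hmem
          have : (⟨e', heS⟩ : H.edgeSet) ∈
              {e : H.edgeSet | ↑e ∈ c.edges} ∩ D := ⟨he', hmem⟩
          rw [hCD] at this
          exact this
        set ct := c.transfer H' hce with hct
        have hctsupp : ct.support = c.support := c.support_transfer hce
        obtain ⟨g1, g2, hg12⟩ := sym2_exists (g : Sym2 W)
        have hg1 : H'.Reachable a g1 := hQg g1 (by rw [hg12]; exact Sym2.mem_mk_left _ _)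
        have hg1supp : g1 ∈ ct.support := by
          rw [hctsupp]
          exact mem_support_of_mem_walk_edge hg (by rw [hg12]; exact Sym2.mem_mk_left _ _)
        intro u hu
        have husupp : u ∈ ct.support := by
          rw [hctsupp]
          exact mem_support_of_mem_walk_edge hg' hu
        exact hg1.trans ((reachable_of_mem_support ct hg1supp).symm.trans
          (reachable_of_mem_support ct husupp))
      have hQa : Q ea := by
        obtain ⟨a2, ha2⟩ := Sym2.mem_iff_exists.mp haa
        have hadj2 : H'.Adj a a2 := by
          rw [hH', SimpleGraph.deleteEdges_adj]
          refine ⟨H.mem_edgeSet.mp (ha2 ▸ ea.prop), ?_⟩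
          rw [← ha2, hmemD]
          exact haD
        intro u hu
        rw [ha2, Sym2.mem_iff] at hu
        rcases hu with rfl | rfl
        · exact SimpleGraph.Reachable.refl _
        · exact hadj2.reachable
      have hQb : Q eb := by
        have hgen : ∀ x, ChainOf (cycSets H) D ea x → Q x := by
          intro x hch
          unfold ChainOf at hch
          induction hch with
          | refl => exact hQa
          | tail h1 h2 ih => exact hstep _ _ h2 ih
        exact hgen eb hchain
      exact hreach (hQb b hbb)

end Whitney

namespace Whitney

section Gside
variable {V : Type*} [Fintype V] {G : SimpleGraph V}

lemma third_vertex (hcard : 4 ≤ Fintype.card V) (u v : V) : ∃ w, w ≠ u ∧ w ≠ v := by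
  classical
  by_contra hctr
  push_neg at hctr
  have hsub : (Finset.univ : Finset V) ⊆ {u, v} := by
    intro w _
    rcases eq_or_ne w u with rfl | hwu
    · simp
    · simp [hctr w hwu]
  have hle := Finset.card_le_card hsub
  have h2 : ({u, v} : Finset V).card ≤ 2 :=
    le_trans (Finset.card_insert_le _ _) (by simp)
  rw [Finset.card_univ] at hle
  omega

lemma edge_at_avoiding (hcard : 4 ≤ Fintype.card V)
    (h3conn : ∀ s : Set V, s.ncard ≤ 2 → (G.induce sᶜ).Connected)
    {u v : V} (hne : u ≠ v) : ∃ e : G.edgeSet, u ∈ (e : Sym2 V) ∧ v ∉ (e : Sym2 V) := by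
  have hconn := h3conn {v} (by simp)
  have hu : u ∈ ({v} : Set V)ᶜ := by simp [hne]
  obtain ⟨w, hwu, hwv⟩ := third_vertex hcard u v
  have hw : w ∈ ({v} : Set V)ᶜ := by simp [hwv]
  obtain ⟨pw⟩ := hconn.preconnected ⟨u, hu⟩ ⟨w, hw⟩
  have hnn : ¬ pw.Nil := SimpleGraph.Walk.not_nil_of_ne
    (fun h => hwu (congrArg Subtype.val h).symm)
  obtain ⟨m, hadj, q, rfl⟩ := SimpleGraph.Walk.not_nil_iff.mp hnn
  have hGadj : G.Adj u ↑m := hadj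
  refine ⟨⟨s(u, ↑m), G.mem_edgeSet.mpr hGadj⟩, Sym2.mem_mk_left _ _, ?_⟩
  intro hv
  rw [Sym2.mem_iff] at hv
  rcases hv with rfl | hv
  · exact hne rfl
  · exact m.prop (by simp [hv])

lemma star_nonempty (hcard : 4 ≤ Fintype.card V)
    (h3conn : ∀ s : Set V, s.ncard ≤ 2 → (G.induce sᶜ).Connected) (v : V) :
    (star G v).Nonempty := by
  obtain ⟨w, hwv, _⟩ := third_vertex hcard v v
  obtain ⟨e, hve, _⟩ := edge_at_avoiding hcard h3conn hwv.symm
  exact ⟨e, hve⟩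

lemma star_min (h3conn : ∀ s : Set V, s.ncard ≤ 2 → (G.induce sᶜ).Connected)
    {v : V} {D : Set G.edgeSet} (hsub : D ⊆ star G v) (hneD : D.Nonempty)
    (hcoc : CocycOf (cycSets G) D) : D = star G v := by
  by_contra hneq
  have hss : D ⊂ star G v := ⟨hsub, fun h => hneq (hsub.antisymm h)⟩
  obtain ⟨f, hfS, hfD⟩ := Set.exists_of_ssubset hss
  obtain ⟨e, heD⟩ := hneD
  have hev : v ∈ (e : Sym2 V) := hsub heD
  obtain ⟨x, hex⟩ := Sym2.mem_iff_exists.mp hev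
  obtain ⟨z, hfz⟩ := Sym2.mem_iff_exists.mp (hfS : v ∈ (f : Sym2 V))
  have hadjx : G.Adj v x := G.mem_edgeSet.mp (hex ▸ e.prop)
  have hadjz : G.Adj v z := G.mem_edgeSet.mp (hfz ▸ f.prop)
  have hxz : x ≠ z := by
    rintro rfl
    exact hfD (Subtype.ext (hfz.trans hex.symm) ▸ heD)
  have hx : x ∈ ({v} : Set V)ᶜ := by simp [hadjx.ne']
  have hz : z ∈ ({v} : Set V)ᶜ := by simp [hadjz.ne']
  obtain ⟨c, hc, he1, he2, hclass⟩ := exists_cycle_via (h3conn {v} (by simp)) hx hz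
    (Set.mem_singleton v) hxz hadjx hadjz
  have heven := hcoc _ ⟨v, c, hc, rfl⟩
  have hone : {e' : G.edgeSet | ↑e' ∈ c.edges} ∩ D = {e} := by
    ext e'
    simp only [Set.mem_inter_iff, Set.mem_setOf_eq, Set.mem_singleton_iff]
    constructor
    · rintro ⟨hmem, heD'⟩
      rcases hclass ↑e' hmem with h | h | h
      · exact Subtype.ext (h.trans hex.symm)
      · exact absurd (Subtype.ext (h.trans hfz.symm) ▸ heD') hfD
      · exact absurd rfl (h v (hsub heD'))
    · rintro rfl
      exact ⟨hex ▸ he1, heD⟩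
  rw [hone, Set.ncard_singleton] at heven
  simp at heven

end Gside
end Whitney

namespace Whitney
section Gside2
variable {V : Type*} {G : SimpleGraph V}

set_option linter.unusedSectionVars false

lemma chain_step (h3conn : ∀ s : Set V, s.ncard ≤ 2 → (G.induce sᶜ).Connected)
    {v a : V} (hav : a ≠ v) (e f : G.edgeSet)
    (hve : v ∉ (e : Sym2 V)) (hvf : v ∉ (f : Sym2 V))
    (hae : a ∈ (e : Sym2 V)) (haf : a ∈ (f : Sym2 V)) :
    ChainOf (cycSets G) (star G v) e f := by
  rcases eq_or_ne e f with rfl | hef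
  · exact Relation.ReflTransGen.refl
  obtain ⟨x, hex⟩ := Sym2.mem_iff_exists.mp hae
  obtain ⟨z, hfz⟩ := Sym2.mem_iff_exists.mp haf
  have hadjx : G.Adj a x := G.mem_edgeSet.mp (hex ▸ e.prop)
  have hadjz : G.Adj a z := G.mem_edgeSet.mp (hfz ▸ f.prop)
  have hxz : x ≠ z := fun h => hef (Subtype.ext (by rw [hex, hfz, h]))
  have hsub2 : ({v, a} : Set V).ncard ≤ 2 :=
    le_trans (Set.ncard_insert_le _ _) (by simp)
  have hxv : x ≠ v := fun h => hve (by rw [hex, h]; exact Sym2.mem_mk_right a v)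
  have hzv : z ≠ v := fun h => hvf (by rw [hfz, h]; exact Sym2.mem_mk_right a v)
  have hx : x ∈ ({v, a} : Set V)ᶜ := by
    simp only [Set.mem_compl_iff, Set.mem_insert_iff, Set.mem_singleton_iff]
    push_neg
    exact ⟨hxv, hadjx.ne'⟩
  have hz : z ∈ ({v, a} : Set V)ᶜ := by
    simp only [Set.mem_compl_iff, Set.mem_insert_iff, Set.mem_singleton_iff]
    push_neg
    exact ⟨hzv, hadjz.ne'⟩
  have ha : a ∈ ({v, a} : Set V) := by simp
  obtain ⟨c, hc, he1, he2, hclass⟩ :=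
    exists_cycle_via (h3conn {v, a} hsub2) hx hz ha hxz hadjx hadjz
  refine Relation.ReflTransGen.single
    ⟨{e' : G.edgeSet | ↑e' ∈ c.edges}, ⟨a, c, hc, rfl⟩, ?_,
      (by rw [Set.mem_setOf_eq, hex]; exact he1),
      (by rw [Set.mem_setOf_eq, hfz]; exact he2)⟩
  rw [Set.eq_empty_iff_forall_notMem]
  rintro e' ⟨hmem, hstar⟩
  rcases hclass ↑e' hmem with h | h | h
  · exact hve (by rw [hex]; exact h ▸ hstar)
  · exact hvf (by rw [hfz]; exact h ▸ hstar)
  · exact (h v hstar) (by simp)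

lemma star_pprop (h3conn : ∀ s : Set V, s.ncard ≤ 2 → (G.induce sᶜ).Connected)
    (v : V) : PpropOf (cycSets G) (star G v) := by
  intro e f hve hvf
  obtain ⟨a, a2, hea⟩ := sym2_exists (e : Sym2 V)
  obtain ⟨b, b2, hfb⟩ := sym2_exists (f : Sym2 V)
  have hae : a ∈ (e : Sym2 V) := by rw [hea]; exact Sym2.mem_mk_left _ _
  have hbf : b ∈ (f : Sym2 V) := by rw [hfb]; exact Sym2.mem_mk_left _ _
  have hav : a ≠ v := fun h => hve (h ▸ hae)
  have hbv : b ≠ v := fun h => hvf (h ▸ hbf)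
  have ha' : a ∈ ({v} : Set V)ᶜ := by simp [hav]
  have hb' : b ∈ ({v} : Set V)ᶜ := by simp [hbv]
  obtain ⟨pw⟩ := (h3conn {v} (by simp)).preconnected ⟨a, ha'⟩ ⟨b, hb'⟩
  have hmain : ∀ (a' b' : ↥(({v} : Set V)ᶜ)) (q : (G.induce ({v} : Set V)ᶜ).Walk a' b')
      (e' f' : G.edgeSet), v ∉ (e' : Sym2 V) → v ∉ (f' : Sym2 V) →
      ↑a' ∈ (e' : Sym2 V) → ↑b' ∈ (f' : Sym2 V) →
      ChainOf (cycSets G) (star G v) e' f' := by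
    intro a' b' q
    induction q with
    | @nil u =>
      intro e' f' hve' hvf' hae' hbf'
      have huv : (↑u : V) ≠ v := fun h => u.prop (by simp [h])
      exact chain_step h3conn huv e' f' hve' hvf' hae' hbf'
    | @cons a' m b' hadj q' ih =>
      intro e' f' hve' hvf' hae' hbf'
      have hGadj : G.Adj ↑a' ↑m := hadj
      have hg : s(↑a', (↑m : V)) ∈ G.edgeSet := G.mem_edgeSet.mpr hGadj
      set g : G.edgeSet := ⟨s(↑a', (↑m : V)), hg⟩ with hgdef
      have hvg : v ∉ (g : Sym2 V) := by
        intro hvmem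
        rw [hgdef] at hvmem
        rcases Sym2.mem_iff.mp hvmem with h | h
        · exact a'.prop (by simp [h.symm])
        · exact m.prop (by simp [h.symm])
      have hstep1 : ChainOf (cycSets G) (star G v) e' g := by
        have hav' : (↑a' : V) ≠ v := fun h => a'.prop (by simp [h])
        exact chain_step h3conn hav' e' g hve' hvg hae' (Sym2.mem_mk_left _ _)
      exact hstep1.trans (ih g f' hvg hvf' (Sym2.mem_mk_right _ _) hbf')
  exact hmain ⟨a, ha'⟩ ⟨b, hb'⟩ pw e f hve hvf hae hbf

end Gside2
end Whitney

open Whitney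

/-- Whitney's theorem: if `G` is 3-connected (at least 4 vertices, and still connected
after deleting any 2 vertices), `H` has no isolated vertices, and `σ` is an edge
bijection mapping simple-cycle edge sets to simple-cycle edge sets and conversely, then
`σ` is induced by a graph isomorphism. -/
theorem stmt14 {V W : Type*} [Fintype V] [Fintype W]
    (G : SimpleGraph V) (H : SimpleGraph W)
    (hcard : 4 ≤ Fintype.card V)
    (h3conn : ∀ s : Set V, s.ncard ≤ 2 → (G.induce sᶜ).Connected)
    (hiso : ∀ w : W, ∃ w', H.Adj w w')
    (σ : G.edgeSet ≃ H.edgeSet)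
    (hcyc : ∀ E' : Set G.edgeSet,
      IsCycleSet G ((fun e : G.edgeSet => (e : Sym2 V)) '' E') ↔
      IsCycleSet H ((fun e : G.edgeSet => (σ e : Sym2 W)) '' E')) :
    ∃ φ : G ≃g H, ∀ e : G.edgeSet, (σ e : Sym2 W) = Sym2.map φ (e : Sym2 V) := by
  classical
  have h1 : ∀ C : Set G.edgeSet, C ∈ cycSets G ↔ σ '' C ∈ cycSets H := by
    intro C
    rw [cycSets_iff_isCycleSet, cycSets_iff_isCycleSet]
    have himg : (fun e : G.edgeSet => (σ e : Sym2 W)) '' C = Subtype.val '' (σ '' C) := by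
      rw [Set.image_image]
    have himg2 : (fun e : G.edgeSet => (e : Sym2 V)) '' C = Subtype.val '' C := rfl
    rw [← himg, ← himg2]
    exact hcyc C
  have h1' : ∀ C : Set H.edgeSet, C ∈ cycSets H ↔ σ.symm '' C ∈ cycSets G := by
    intro C
    constructor
    · intro h
      apply (h1 (σ.symm '' C)).mpr
      rwa [Equiv.image_symm_image]
    · intro h
      have := (h1 (σ.symm '' C)).mp h
      rwa [Equiv.image_symm_image] at this
  have hstarH : ∀ v : V, ∃ w : W, σ '' star G v = star H w := by
    intro v
    have hne : (σ '' star G v).Nonempty := (star_nonempty hcard h3conn v).image σ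
    have hcoc : CocycOf (cycSets H) (σ '' star G v) :=
      cocycOf_image σ _ _ h1 _ (star_cocyc G v)
    have hP : PpropOf (cycSets H) (σ '' star G v) :=
      ppropOf_image σ _ _ h1 _ (star_pprop h3conn v)
    have hmin : ∀ D' ⊆ σ '' star G v, D'.Nonempty → CocycOf (cycSets H) D' →
        D' = σ '' star G v := by
      intro D' hsub hne' hcoc'
      have hg : σ.symm '' D' ⊆ star G v := by
        rintro x ⟨y, hy, rfl⟩
        obtain ⟨z, hz, hzeq⟩ := hsub hy
        rw [← hzeq]
        simpa using hz
      have hne'' : (σ.symm '' D').Nonempty := hne'.image _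
      have hcoc'' : CocycOf (cycSets G) (σ.symm '' D') :=
        cocycOf_image σ.symm _ _ h1' _ hcoc'
      have hmineq := star_min h3conn hg hne'' hcoc''
      rw [← Equiv.image_symm_image σ D', hmineq]
    exact core_H H hiso _ hne hcoc hmin hP
  choose φ0 hφ0 using hstarH
  have hmemphi : ∀ (e : G.edgeSet) (u : V), u ∈ (e : Sym2 V) → φ0 u ∈ (σ e : Sym2 W) := by
    intro e u hu
    have h2 : σ e ∈ star H (φ0 u) := hφ0 u ▸ Set.mem_image_of_mem σ hu
    exact h2
  have hmemphi' : ∀ (e : G.edgeSet) (u : V), φ0 u ∈ (σ e : Sym2 W) → u ∈ (e : Sym2 V) := by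
    intro e u hmem
    have h2 : σ e ∈ star H (φ0 u) := hmem
    rw [← hφ0 u] at h2
    obtain ⟨e', he', heq⟩ := h2
    exact (σ.injective heq) ▸ he'
  have hinj : Function.Injective φ0 := by
    intro u u' huu
    by_contra hne
    obtain ⟨e, hue, hu'e⟩ := edge_at_avoiding hcard h3conn hne
    exact hu'e (hmemphi' e u' (huu ▸ hmemphi e u hue))
  have hformula : ∀ (e : G.edgeSet) (u u' : V), (e : Sym2 V) = s(u, u') →
      (σ e : Sym2 W) = s(φ0 u, φ0 u') := by
    intro e u u' heq
    have hadj : G.Adj u u' := G.mem_edgeSet.mp (heq ▸ e.prop)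
    have h1m : φ0 u ∈ (σ e : Sym2 W) :=
      hmemphi e u (by rw [heq]; exact Sym2.mem_mk_left _ _)
    have h2m : φ0 u' ∈ (σ e : Sym2 W) :=
      hmemphi e u' (by rw [heq]; exact Sym2.mem_mk_right _ _)
    have hnep : φ0 u ≠ φ0 u' := fun h => hadj.ne (hinj h)
    exact (Sym2.mem_and_mem_iff hnep).mp ⟨h1m, h2m⟩
  have hsurj : Function.Surjective φ0 := by
    intro w
    obtain ⟨w', hww'⟩ := hiso w
    set h : H.edgeSet := ⟨s(w, w'), H.mem_edgeSet.mpr hww'⟩ with hdef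
    obtain ⟨u, u', heq⟩ := sym2_exists ((σ.symm h : G.edgeSet) : Sym2 V)
    have hσe : ((σ (σ.symm h) : H.edgeSet) : Sym2 W) = s(φ0 u, φ0 u') :=
      hformula (σ.symm h) u u' heq
    rw [Equiv.apply_symm_apply] at hσe
    have hwmem : w ∈ s(φ0 u, φ0 u') := hσe ▸ Sym2.mem_mk_left w w'
    rcases Sym2.mem_iff.mp hwmem with hh | hh
    · exact ⟨u, hh.symm⟩
    · exact ⟨u', hh.symm⟩
  have hadj_iff : ∀ u u' : V, H.Adj (φ0 u) (φ0 u') ↔ G.Adj u u' := by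
    intro u u'
    constructor
    · intro hadj
      set h : H.edgeSet := ⟨s(φ0 u, φ0 u'), H.mem_edgeSet.mpr hadj⟩ with hdef
      obtain ⟨x, y, heq⟩ := sym2_exists ((σ.symm h : G.edgeSet) : Sym2 V)
      have hσe : ((σ (σ.symm h) : H.edgeSet) : Sym2 W) = s(φ0 x, φ0 y) :=
        hformula (σ.symm h) x y heq
      rw [Equiv.apply_symm_apply] at hσe
      have hadyx : G.Adj x y := G.mem_edgeSet.mp (heq ▸ (σ.symm h).prop)
      rcases Sym2.eq_iff.mp hσe with ⟨ha, hb⟩ | ⟨ha, hb⟩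
      · exact (hinj ha) ▸ (hinj hb) ▸ hadyx
      · exact (hinj hb) ▸ (hinj ha) ▸ hadyx.symm
    · intro hadj
      have he : s(u, u') ∈ G.edgeSet := G.mem_edgeSet.mpr hadj
      have hf := hformula ⟨s(u, u'), he⟩ u u' rfl
      exact H.mem_edgeSet.mp (hf ▸ (σ ⟨s(u, u'), he⟩).prop)
  refine ⟨⟨Equiv.ofBijective φ0 ⟨hinj, hsurj⟩, ?_⟩, ?_⟩
  · intro u u'
    exact hadj_iff u u'
  · intro e
    obtain ⟨u, u', heq⟩ := sym2_exists (e : Sym2 V)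
    rw [heq, Sym2.map_pair_eq]
    exact hformula e u u' heq
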